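/- Fix n, m and capacities k_1, …, k_m ≥ 1. Let q : [n]×[m] → ℝ_{≥0} satisfy Σ_{e∈S} q(e) ≤ r(S) for every S ⊆ [n]×[m]. Then for every v : [n]×[m] → ℝ_{≥0} and every matching A1, Σ_{e ∉ A1} q(e)·v(e) ≤ max over matchings M with M ∩ A1 = ∅ of Σ_{e∈M} v(e). -/

import Mathlib

open Finset

section Helpers

variable {n m : ℕ}

private lemma fmvb_exists_kernel_vec (F : Finset (Fin n × Fin m)) (TA : Finset (Fin n))
    (TB : Finset (Fin m)) (h : TA.card + TB.card < F.card) :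
    ∃ d : Fin n × Fin m → ℝ, (∀ e ∉ F, d e = 0) ∧ d ≠ 0 ∧
      (∀ i ∈ TA, ∑ e ∈ F.filter (fun e => e.1 = i), d e = 0) ∧
      (∀ j ∈ TB, ∑ e ∈ F.filter (fun e => e.2 = j), d e = 0) := by
  classical
  let L : (↥F → ℝ) →ₗ[ℝ] (↥TA → ℝ) × (↥TB → ℝ) :=
    { toFun := fun d =>
        (fun i => ∑ e : ↥F, if (e : Fin n × Fin m).1 = (i : Fin n) then d e else 0,
         fun j => ∑ e : ↥F, if (e : Fin n × Fin m).2 = (j : Fin m) then d e else 0)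
      map_add' := by
        intro a b
        ext u <;> simp [Finset.sum_add_distrib, ite_add_zero]
      map_smul' := by
        intro c a
        ext u <;> simp [Finset.mul_sum] }
  have hnotinj : ¬ Function.Injective L := by
    intro hinj
    have := LinearMap.finrank_le_finrank_of_injective hinj
    simp [Module.finrank_pi, Module.finrank_prod] at this
    omega
  rw [Function.not_injective_iff] at hnotinj
  obtain ⟨a, b, hab, hne⟩ := hnotinj
  set d0 : ↥F → ℝ := a - b with hd0
  have hker : L d0 = 0 := by rw [hd0, map_sub, hab, sub_self]
  refine ⟨fun e => if h : e ∈ F then d0 ⟨e, h⟩ else 0, fun e he => by simp [he], ?_, ?_, ?_⟩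
  · intro hzero
    apply hne
    have : d0 = 0 := by
      funext e
      have := congrFun hzero e.1
      simpa [e.2] using this
    rw [← sub_eq_zero]; exact this
  · intro i hi
    have h1 := congrFun (congrArg Prod.fst hker) ⟨i, hi⟩
    simp only [Finset.sum_filter]
    rw [← Finset.sum_attach F
      (fun e => if e.1 = i then (if h : e ∈ F then d0 ⟨e, h⟩ else 0) else 0)]
    simpa [L] using h1
  · intro j hj
    have h1 := congrFun (congrArg Prod.snd hker) ⟨j, hj⟩
    simp only [Finset.sum_filter]
    rw [← Finset.sum_attach F
      (fun e => if e.2 = j then (if h : e ∈ F then d0 ⟨e, h⟩ else 0) else 0)]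
    simpa [L] using h1

private lemma fmvb_tight_agent_deg (x : Fin n × Fin m → ℝ) (hx0 : ∀ e, 0 ≤ x e)
    (i : Fin n) (htight : ∑ e ∈ univ.filter (fun e => e.1 = i), x e = 1)
    (hcard : ((univ.filter (fun e => x e ≠ 0 ∧ x e ≠ 1)).filter (fun e => e.1 = i)).card = 1) :
    False := by
  classical
  set F := univ.filter (fun e : Fin n × Fin m => x e ≠ 0 ∧ x e ≠ 1) with hF
  obtain ⟨e0, he0⟩ := Finset.card_eq_one.mp hcard
  have he0F : e0 ∈ F.filter (fun e => e.1 = i) := by rw [he0]; exact Finset.mem_singleton_self _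
  have he0F' : e0 ∈ F := (Finset.mem_filter.mp he0F).1
  have he0i : e0.1 = i := (Finset.mem_filter.mp he0F).2
  have hfrac : x e0 ≠ 0 ∧ x e0 ≠ 1 := (Finset.mem_filter.mp he0F').2
  have he0S : e0 ∈ univ.filter (fun e => e.1 = i) := by simp [he0i]
  have hrest : ∀ e ∈ (univ.filter (fun e => e.1 = i)).erase e0, x e = 0 ∨ x e = 1 := by
    intro e he
    by_contra hc
    push_neg at hc
    have heF : e ∈ F.filter (fun e => e.1 = i) := by
      simp only [hF, Finset.mem_filter, Finset.mem_univ, true_and]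
      exact ⟨⟨hc.1, hc.2⟩, (Finset.mem_filter.mp (Finset.mem_of_mem_erase he)).2⟩
    rw [he0] at heF
    exact (Finset.ne_of_mem_erase he) (Finset.mem_singleton.mp heF)
  by_cases hone : ∃ e ∈ (univ.filter (fun e => e.1 = i)).erase e0, x e = 1
  · obtain ⟨e1, he1, hxe1⟩ := hone
    have hne : e0 ≠ e1 := (Finset.ne_of_mem_erase he1).symm
    have hsub : ({e0, e1} : Finset (Fin n × Fin m)) ⊆ univ.filter (fun e => e.1 = i) := by
      intro e he
      rcases Finset.mem_insert.mp he with h | h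
      · exact h ▸ he0S
      · exact (Finset.mem_singleton.mp h) ▸ Finset.mem_of_mem_erase he1
    have hsum : x e0 + x e1 ≤ ∑ e ∈ univ.filter (fun e => e.1 = i), x e := by
      rw [← Finset.sum_pair hne]
      exact Finset.sum_le_sum_of_subset_of_nonneg hsub (fun e _ _ => hx0 e)
    have hx0pos : 0 < x e0 := lt_of_le_of_ne (hx0 e0) (Ne.symm hfrac.1)
    rw [htight, hxe1] at hsum
    linarith
  · push_neg at hone
    have hzero : ∀ e ∈ (univ.filter (fun e => e.1 = i)).erase e0, x e = 0 := by
      intro e he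
      rcases hrest e he with h | h
      · exact h
      · exact absurd h (hone e he)
    have : ∑ e ∈ univ.filter (fun e => e.1 = i), x e = x e0 := by
      rw [← Finset.add_sum_erase _ _ he0S, Finset.sum_eq_zero hzero, add_zero]
    exact hfrac.2 (by rw [← this, htight])

private lemma fmvb_tight_item_deg (kj : ℕ) (x : Fin n × Fin m → ℝ) (hx0 : ∀ e, 0 ≤ x e)
    (hx1 : ∀ e, x e ≤ 1)
    (j : Fin m) (htight : ∑ e ∈ univ.filter (fun e => e.2 = j), x e = (kj : ℝ))
    (hcard : ((univ.filter (fun e => x e ≠ 0 ∧ x e ≠ 1)).filter (fun e => e.2 = j)).card = 1) :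
    False := by
  classical
  set F := univ.filter (fun e : Fin n × Fin m => x e ≠ 0 ∧ x e ≠ 1) with hF
  obtain ⟨e0, he0⟩ := Finset.card_eq_one.mp hcard
  have he0F : e0 ∈ F.filter (fun e => e.2 = j) := by rw [he0]; exact Finset.mem_singleton_self _
  have he0F' : e0 ∈ F := (Finset.mem_filter.mp he0F).1
  have he0j : e0.2 = j := (Finset.mem_filter.mp he0F).2
  have hfrac : x e0 ≠ 0 ∧ x e0 ≠ 1 := (Finset.mem_filter.mp he0F').2
  have he0S : e0 ∈ univ.filter (fun e => e.2 = j) := by simp [he0j]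
  set R := (univ.filter (fun e : Fin n × Fin m => e.2 = j)).erase e0 with hR
  have hrest : ∀ e ∈ R, x e = 0 ∨ x e = 1 := by
    intro e he
    by_contra hc
    push_neg at hc
    have heF : e ∈ F.filter (fun e => e.2 = j) := by
      simp only [hF, Finset.mem_filter, Finset.mem_univ, true_and]
      exact ⟨⟨hc.1, hc.2⟩, (Finset.mem_filter.mp (Finset.mem_of_mem_erase he)).2⟩
    rw [he0] at heF
    exact (Finset.ne_of_mem_erase he) (Finset.mem_singleton.mp heF)
  have hRsum : ∑ e ∈ R, x e = ((R.filter (fun e => x e = 1)).card : ℝ) := by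
    have : ∀ e ∈ R, x e = if x e = 1 then (1:ℝ) else 0 := by
      intro e he
      rcases hrest e he with h | h
      · rw [h]; simp [h]
      · simp [h]
    rw [Finset.sum_congr rfl this, Finset.sum_boole]
  have hkey : x e0 + ((R.filter (fun e => x e = 1)).card : ℝ) = (kj : ℝ) := by
    rw [← hRsum]
    rw [← Finset.add_sum_erase _ _ he0S] at htight
    exact htight
  have h1 : 0 < x e0 := lt_of_le_of_ne (hx0 e0) (Ne.symm hfrac.1)
  have h2 : x e0 < 1 := lt_of_le_of_ne (hx1 e0) hfrac.2
  set c := (R.filter (fun e => x e = 1)).card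
  have hc1 : (c : ℝ) < kj := by linarith
  have hc2 : (kj : ℝ) < (c : ℝ) + 1 := by linarith
  have h3 : c < kj := by exact_mod_cast hc1
  have h4 : kj < c + 1 := by exact_mod_cast hc2
  omega

private lemma fmvb_sum_deg_fst (F : Finset (Fin n × Fin m)) (TA : Finset (Fin n)) :
    ∑ i ∈ TA, (F.filter (fun e => e.1 = i)).card = (F.filter (fun e => e.1 ∈ TA)).card := by
  classical
  rw [Finset.card_eq_sum_card_fiberwise
    (f := Prod.fst) (s := F.filter (fun e => e.1 ∈ TA)) (t := TA) (fun e he => (Finset.mem_filter.mp he).2)]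
  refine Finset.sum_congr rfl fun i hi => ?_
  congr 1
  ext e
  simp only [Finset.mem_filter]
  constructor
  · rintro ⟨heF, hei⟩; exact ⟨⟨heF, hei ▸ hi⟩, hei⟩
  · rintro ⟨⟨heF, _⟩, hei⟩; exact ⟨heF, hei⟩

private lemma fmvb_sum_deg_snd (F : Finset (Fin n × Fin m)) (TB : Finset (Fin m)) :
    ∑ j ∈ TB, (F.filter (fun e => e.2 = j)).card = (F.filter (fun e => e.2 ∈ TB)).card := by
  classical
  rw [Finset.card_eq_sum_card_fiberwise
    (f := Prod.snd) (s := F.filter (fun e => e.2 ∈ TB)) (t := TB) (fun e he => (Finset.mem_filter.mp he).2)]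
  refine Finset.sum_congr rfl fun j hj => ?_
  congr 1
  ext e
  simp only [Finset.mem_filter]
  constructor
  · rintro ⟨heF, hej⟩; exact ⟨⟨heF, hej ▸ hj⟩, hej⟩
  · rintro ⟨⟨heF, _⟩, hej⟩; exact ⟨heF, hej⟩

private lemma fmvb_perturb (k : Fin m → ℕ) (A1 : Finset (Fin n × Fin m))
    (x d : Fin n × Fin m → ℝ)
    (hx0 : ∀ e, 0 ≤ x e)
    (hxA1 : ∀ e ∈ A1, x e = 0)
    (hxA : ∀ i, ∑ e ∈ univ.filter (fun e => e.1 = i), x e ≤ 1)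
    (hxB : ∀ j, ∑ e ∈ univ.filter (fun e => e.2 = j), x e ≤ (k j : ℝ))
    (hsupp : ∀ e, d e ≠ 0 → (x e ≠ 0 ∧ x e ≠ 1))
    (hrA : ∀ i, ∑ e ∈ univ.filter (fun e => e.1 = i), x e = 1 →
      ∑ e ∈ univ.filter (fun e => e.1 = i), d e = 0)
    (hrB : ∀ j, ∑ e ∈ univ.filter (fun e => e.2 = j), x e = (k j : ℝ) →
      ∑ e ∈ univ.filter (fun e => e.2 = j), d e = 0) :
    ∀ᶠ ε in nhds (0:ℝ),
      (∀ e, 0 ≤ x e + ε * d e) ∧ (∀ e ∈ A1, x e + ε * d e = 0) ∧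
      (∀ i, ∑ e ∈ univ.filter (fun e => e.1 = i), (x e + ε * d e) ≤ 1) ∧
      (∀ j, ∑ e ∈ univ.filter (fun e => e.2 = j), (x e + ε * d e) ≤ (k j : ℝ)) := by
  classical
  have hexp : ∀ (ε : ℝ) (s : Finset (Fin n × Fin m)),
      ∑ e ∈ s, (x e + ε * d e) = (∑ e ∈ s, x e) + ε * ∑ e ∈ s, d e := by
    intro ε s
    rw [Finset.sum_add_distrib, Finset.mul_sum]
  have h1 : ∀ᶠ ε in nhds (0:ℝ), ∀ e, 0 ≤ x e + ε * d e := by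
    rw [Filter.eventually_all]
    intro e
    by_cases hde : d e = 0
    · exact Filter.Eventually.of_forall fun ε => by simpa [hde] using hx0 e
    · have hpos : 0 < x e := lt_of_le_of_ne (hx0 e) (Ne.symm (hsupp e hde).1)
      have ht : Filter.Tendsto (fun ε : ℝ => x e + ε * d e) (nhds 0) (nhds (x e)) := by
        have : Continuous (fun ε : ℝ => x e + ε * d e) :=
          continuous_const.add (continuous_id.mul continuous_const)
        simpa using this.tendsto 0
      exact (ht.eventually (eventually_gt_nhds hpos)).mono fun ε h => le_of_lt h
  have h2 : ∀ᶠ ε in nhds (0:ℝ), ∀ e ∈ A1, x e + ε * d e = 0 := by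
    refine Filter.Eventually.of_forall fun ε e he => ?_
    have hde : d e = 0 := by
      by_contra hde
      exact (hsupp e hde).1 (hxA1 e he)
    simp [hxA1 e he, hde]
  have h3 : ∀ᶠ ε in nhds (0:ℝ),
      ∀ i, ∑ e ∈ univ.filter (fun e => e.1 = i), (x e + ε * d e) ≤ 1 := by
    rw [Filter.eventually_all]
    intro i
    by_cases htight : ∑ e ∈ univ.filter (fun e => e.1 = i), x e = 1
    · exact Filter.Eventually.of_forall fun ε => by
        rw [hexp, hrA i htight, mul_zero, add_zero, htight]
    · have hlt : ∑ e ∈ univ.filter (fun e => e.1 = i), x e < 1 :=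
        lt_of_le_of_ne (hxA i) htight
      have ht : Filter.Tendsto
          (fun ε : ℝ => (∑ e ∈ univ.filter (fun e => e.1 = i), x e) +
            ε * ∑ e ∈ univ.filter (fun e => e.1 = i), d e) (nhds 0)
          (nhds (∑ e ∈ univ.filter (fun e => e.1 = i), x e)) := by
        have : Continuous (fun ε : ℝ => (∑ e ∈ univ.filter (fun e => e.1 = i), x e) +
            ε * ∑ e ∈ univ.filter (fun e => e.1 = i), d e) :=
          continuous_const.add (continuous_id.mul continuous_const)
        simpa using this.tendsto 0
      exact (ht.eventually (eventually_lt_nhds hlt)).mono fun ε h => by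
        rw [hexp]; exact le_of_lt h
  have h4 : ∀ᶠ ε in nhds (0:ℝ),
      ∀ j, ∑ e ∈ univ.filter (fun e => e.2 = j), (x e + ε * d e) ≤ (k j : ℝ) := by
    rw [Filter.eventually_all]
    intro j
    by_cases htight : ∑ e ∈ univ.filter (fun e => e.2 = j), x e = (k j : ℝ)
    · exact Filter.Eventually.of_forall fun ε => by
        rw [hexp, hrB j htight, mul_zero, add_zero, htight]
    · have hlt : ∑ e ∈ univ.filter (fun e => e.2 = j), x e < (k j : ℝ) :=
        lt_of_le_of_ne (hxB j) htight
      have ht : Filter.Tendsto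
          (fun ε : ℝ => (∑ e ∈ univ.filter (fun e => e.2 = j), x e) +
            ε * ∑ e ∈ univ.filter (fun e => e.2 = j), d e) (nhds 0)
          (nhds (∑ e ∈ univ.filter (fun e => e.2 = j), x e)) := by
        have : Continuous (fun ε : ℝ => (∑ e ∈ univ.filter (fun e => e.2 = j), x e) +
            ε * ∑ e ∈ univ.filter (fun e => e.2 = j), d e) :=
          continuous_const.add (continuous_id.mul continuous_const)
        simpa using this.tendsto 0
      exact (ht.eventually (eventually_lt_nhds hlt)).mono fun ε h => by
        rw [hexp]; exact le_of_lt h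
  exact ((h1.and h2).and (h3.and h4)).mono fun ε h => ⟨h.1.1, h.1.2, h.2.1, h.2.2⟩

end Helpers

/-- `S` is a matching: each agent `i` appears in at most one pair of `S` and
each item `j` appears in at most `k j` pairs of `S`. -/
def IsMatching (n m : ℕ) (k : Fin m → ℕ) (S : Finset (Fin n × Fin m)) : Prop :=
  (∀ i : Fin n, (S.filter fun e => e.1 = i).card ≤ 1) ∧
  (∀ j : Fin m, (S.filter fun e => e.2 = j).card ≤ k j)

/-- `matchRank n m k S` is the maximum cardinality of a matching contained
in `S`. -/
noncomputable def matchRank (n m : ℕ) (k : Fin m → ℕ)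
    (S : Finset (Fin n × Fin m)) : ℕ :=
  sSup {c : ℕ | ∃ M : Finset (Fin n × Fin m), M ⊆ S ∧ IsMatching n m k M ∧ M.card = c}

/-- If `q ≥ 0` satisfies `∑_{e ∈ S} q e ≤ r S` for every `S`,
then for every `v ≥ 0` and every matching `A1`, the weighted sum
`∑_{e ∉ A1} q e · v e` is at most the maximum `v`-value of a matching disjoint
from `A1`. -/
theorem fractional_matching_value_bound
    (n m : ℕ) (k : Fin m → ℕ) (hk : ∀ j, 1 ≤ k j)
    (q : Fin n × Fin m → ℝ) (hq : ∀ e, 0 ≤ q e)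
    (hfeas : ∀ S : Finset (Fin n × Fin m), ∑ e ∈ S, q e ≤ (matchRank n m k S : ℝ))
    (v : Fin n × Fin m → ℝ) (hv : ∀ e, 0 ≤ v e)
    (A1 : Finset (Fin n × Fin m)) (hA1 : IsMatching n m k A1) :
    ∃ M : Finset (Fin n × Fin m), IsMatching n m k M ∧ Disjoint M A1 ∧
      ∑ e ∈ Finset.univ \ A1, q e * v e ≤ ∑ e ∈ M, v e := by
  classical
  -- rank upper bounds
  have hmatch_empty : IsMatching n m k (∅ : Finset (Fin n × Fin m)) :=
    ⟨fun i => by simp, fun j => by simp⟩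
  have hrank_le : ∀ (S : Finset (Fin n × Fin m)) (c : ℕ),
      (∀ M, M ⊆ S → IsMatching n m k M → M.card ≤ c) → matchRank n m k S ≤ c := by
    intro S c h
    refine csSup_le ⟨0, ∅, Finset.empty_subset S, hmatch_empty, Finset.card_empty⟩ ?_
    rintro b ⟨M, hMS, hM, rfl⟩
    exact h M hMS hM
  have hrankA : ∀ i : Fin n,
      matchRank n m k ((univ.filter (fun e => e.1 = i)) \ A1) ≤ 1 := by
    intro i
    refine hrank_le _ _ fun M hMS hM => ?_
    have hcardM : M.card = (M.filter (fun e => e.1 = i)).card := by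
      rw [Finset.filter_true_of_mem]
      intro e he
      have h2 := hMS he
      rw [Finset.mem_sdiff] at h2
      exact (Finset.mem_filter.mp h2.1).2
    rw [hcardM]
    exact hM.1 i
  have hrankB : ∀ j : Fin m,
      matchRank n m k ((univ.filter (fun e => e.2 = j)) \ A1) ≤ k j := by
    intro j
    refine hrank_le _ _ fun M hMS hM => ?_
    have hcardM : M.card = (M.filter (fun e => e.2 = j)).card := by
      rw [Finset.filter_true_of_mem]
      intro e he
      have h2 := hMS he
      rw [Finset.mem_sdiff] at h2
      exact (Finset.mem_filter.mp h2.1).2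
    rw [hcardM]
    exact hM.2 j
  -- the fractional matching polytope (with support off A1)
  set P : Set ((Fin n × Fin m) → ℝ) :=
    {x | (∀ e, 0 ≤ x e) ∧ (∀ e ∈ A1, x e = 0) ∧
      (∀ i, ∑ e ∈ univ.filter (fun e => e.1 = i), x e ≤ 1) ∧
      (∀ j, ∑ e ∈ univ.filter (fun e => e.2 = j), x e ≤ (k j : ℝ))} with hP
  have csum : ∀ (s : Finset (Fin n × Fin m)),
      Continuous (fun x : (Fin n × Fin m) → ℝ => ∑ e ∈ s, x e) :=
    fun s => continuous_finset_sum s (fun e _ => continuous_apply e)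
  have hPclosed : IsClosed P := by
    have hPeq : P = (⋂ e, {x : (Fin n × Fin m) → ℝ | 0 ≤ x e}) ∩
        ((⋂ e ∈ A1, {x : (Fin n × Fin m) → ℝ | x e = 0}) ∩
        ((⋂ i, {x : (Fin n × Fin m) → ℝ |
            ∑ e ∈ univ.filter (fun e => e.1 = i), x e ≤ 1}) ∩
        (⋂ j, {x : (Fin n × Fin m) → ℝ |
            ∑ e ∈ univ.filter (fun e => e.2 = j), x e ≤ (k j : ℝ)}))) := by
      ext x
      simp only [hP, Set.mem_setOf_eq, Set.mem_inter_iff, Set.mem_iInter]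
      try tauto
    rw [hPeq]
    refine (isClosed_iInter fun e => isClosed_le continuous_const (continuous_apply e)).inter
      ((isClosed_biInter fun e _ => isClosed_eq (continuous_apply e) continuous_const).inter
      ((isClosed_iInter fun i => isClosed_le (csum _) continuous_const).inter
      (isClosed_iInter fun j => isClosed_le (csum _) continuous_const)))
  have hsub : P ⊆ Set.pi Set.univ (fun _ : Fin n × Fin m => Set.Icc (0:ℝ) 1) := by
    intro x hx e _
    refine ⟨hx.1 e, ?_⟩
    calc x e ≤ ∑ e' ∈ univ.filter (fun e' => e'.1 = e.1), x e' :=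
          Finset.single_le_sum (fun e' _ => hx.1 e') (by simp)
      _ ≤ 1 := hx.2.2.1 e.1
  have hPcomp : IsCompact P :=
    (isCompact_univ_pi (fun _ => isCompact_Icc)).of_isClosed_subset hPclosed hsub
  have hPne : P.Nonempty := ⟨0, fun e => le_refl 0, fun e _ => rfl, by simp,
    fun j => by simp [Nat.cast_nonneg]⟩
  have cobj : Continuous (fun x : (Fin n × Fin m) → ℝ => ∑ e, v e * x e) :=
    continuous_finset_sum _ (fun e _ => continuous_const.mul (continuous_apply e))
  have csq : Continuous (fun x : (Fin n × Fin m) → ℝ => ∑ e, x e * x e) :=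
    continuous_finset_sum _ (fun e _ => (continuous_apply e).mul (continuous_apply e))
  obtain ⟨x₁, hx₁P, hx₁max⟩ := hPcomp.exists_isMaxOn hPne cobj.continuousOn
  rw [isMaxOn_iff] at hx₁max
  set K : Set ((Fin n × Fin m) → ℝ) := P ∩ {x | ∑ e, v e * x e = ∑ e, v e * x₁ e} with hK
  have hKcomp : IsCompact K := hPcomp.inter_right (isClosed_eq cobj continuous_const)
  have hKne : K.Nonempty := ⟨x₁, hx₁P, rfl⟩
  obtain ⟨x₂, hx₂K, hx₂max⟩ := hKcomp.exists_isMaxOn hKne csq.continuousOn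
  rw [isMaxOn_iff] at hx₂max
  obtain ⟨hx0, hxA1, hxA, hxB⟩ := hx₂K.1
  have hox₂ : ∑ e, v e * x₂ e = ∑ e, v e * x₁ e := hx₂K.2
  have hxle1 : ∀ e, x₂ e ≤ 1 := by
    intro e
    have h2 := hsub hx₂K.1
    exact (h2 e (Set.mem_univ e)).2
  -- integrality of x₂
  have hint : ∀ e, x₂ e = 0 ∨ x₂ e = 1 := by
    by_contra hcon
    push_neg at hcon
    obtain ⟨estar, he1, he2⟩ := hcon
    set F := univ.filter (fun e : Fin n × Fin m => x₂ e ≠ 0 ∧ x₂ e ≠ 1) with hFdef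
    have hFne : F.Nonempty := ⟨estar, by simp [hFdef, he1, he2]⟩
    set TA := univ.filter (fun i : Fin n =>
      (∑ e ∈ univ.filter (fun e => e.1 = i), x₂ e) = 1 ∧
      (F.filter (fun e => e.1 = i)).Nonempty) with hTAdef
    set TB := univ.filter (fun j : Fin m =>
      (∑ e ∈ univ.filter (fun e => e.2 = j), x₂ e) = (k j : ℝ) ∧
      (F.filter (fun e => e.2 = j)).Nonempty) with hTBdef
    have hdegA : ∀ i ∈ TA, 2 ≤ (F.filter (fun e => e.1 = i)).card := by
      intro i hi
      simp only [hTAdef, Finset.mem_filter, Finset.mem_univ, true_and] at hi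
      have h1 := hi.2.card_pos
      have hne1 : (F.filter (fun e => e.1 = i)).card ≠ 1 := by
        intro hc
        exact fmvb_tight_agent_deg x₂ hx0 i hi.1 (by rw [← hFdef]; exact hc)
      omega
    have hdegB : ∀ j ∈ TB, 2 ≤ (F.filter (fun e => e.2 = j)).card := by
      intro j hj
      simp only [hTBdef, Finset.mem_filter, Finset.mem_univ, true_and] at hj
      have h1 := hj.2.card_pos
      have hne1 : (F.filter (fun e => e.2 = j)).card ≠ 1 := by
        intro hc
        exact fmvb_tight_item_deg (k j) x₂ hx0 hxle1 j hj.1 (by rw [← hFdef]; exact hc)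
      omega
    have hA2 : 2 * TA.card ≤ (F.filter (fun e => e.1 ∈ TA)).card := by
      rw [← fmvb_sum_deg_fst]
      calc 2 * TA.card = ∑ _i ∈ TA, 2 := by rw [Finset.sum_const, smul_eq_mul, mul_comm]
        _ ≤ ∑ i ∈ TA, (F.filter (fun e => e.1 = i)).card := Finset.sum_le_sum hdegA
    have hB2 : 2 * TB.card ≤ (F.filter (fun e => e.2 ∈ TB)).card := by
      rw [← fmvb_sum_deg_snd]
      calc 2 * TB.card = ∑ _j ∈ TB, 2 := by rw [Finset.sum_const, smul_eq_mul, mul_comm]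
        _ ≤ ∑ j ∈ TB, (F.filter (fun e => e.2 = j)).card := Finset.sum_le_sum hdegB
    have hD : ∃ d : Fin n × Fin m → ℝ, (∀ e ∉ F, d e = 0) ∧ d ≠ 0 ∧
        (∀ i ∈ TA, ∑ e ∈ F.filter (fun e => e.1 = i), d e = 0) ∧
        (∀ j ∈ TB, ∑ e ∈ F.filter (fun e => e.2 = j), d e = 0) := by
      by_cases hall : ∀ e ∈ F, e.1 ∈ TA ∧ e.2 ∈ TB
      · obtain ⟨e0, he0⟩ := hFne
        have hi0 : e0.1 ∈ TA := (hall e0 he0).1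
        have hFA : F.filter (fun e => e.1 ∈ TA) = F :=
          Finset.filter_true_of_mem (fun e he => (hall e he).1)
        have hFB : F.filter (fun e => e.2 ∈ TB) = F :=
          Finset.filter_true_of_mem (fun e he => (hall e he).2)
        have hcnt : (TA.erase e0.1).card + TB.card < F.card := by
          rw [Finset.card_erase_of_mem hi0]
          have hA2' : 2 * TA.card ≤ F.card := by rw [← hFA]; exact hA2
          have hB2' : 2 * TB.card ≤ F.card := by rw [← hFB]; exact hB2
          have hTApos : 0 < TA.card := Finset.card_pos.mpr ⟨e0.1, hi0⟩
          omega
        obtain ⟨d, hd0, hdne, hdA, hdB⟩ := fmvb_exists_kernel_vec F (TA.erase e0.1) TB hcnt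
        refine ⟨d, hd0, hdne, ?_, hdB⟩
        intro i hi
        by_cases hii : i = e0.1
        · subst hii
          have hsplitA : ∑ i' ∈ TA, ∑ e ∈ F.filter (fun e => e.1 = i'), d e =
              ∑ e ∈ F, d e :=
            Finset.sum_fiberwise_of_maps_to (fun e he => (hall e he).1) d
          have hsplitB : ∑ j ∈ TB, ∑ e ∈ F.filter (fun e => e.2 = j), d e =
              ∑ e ∈ F, d e :=
            Finset.sum_fiberwise_of_maps_to (fun e he => (hall e he).2) d
          have hFd : ∑ e ∈ F, d e = 0 := by
            rw [← hsplitB]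
            exact Finset.sum_eq_zero hdB
          have hTAz : ∑ i' ∈ TA, ∑ e ∈ F.filter (fun e => e.1 = i'), d e = 0 :=
            hsplitA.trans hFd
          rw [← Finset.add_sum_erase _ _ hi] at hTAz
          rw [Finset.sum_eq_zero (fun i' hi' => hdA i' hi'), add_zero] at hTAz
          exact hTAz
        · exact hdA i (Finset.mem_erase.mpr ⟨hii, hi⟩)
      · push_neg at hall
        obtain ⟨e1, he1, hne1⟩ := hall
        have hcnt : TA.card + TB.card < F.card := by
          have hFpos : 0 < F.card := Finset.card_pos.mpr ⟨e1, he1⟩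
          by_cases hc : e1.1 ∈ TA
          · have hc2 : e1.2 ∉ TB := fun h => hne1 hc h
            have hss : F.filter (fun e => e.2 ∈ TB) ⊆ F.erase e1 := by
              intro e he
              rw [Finset.mem_filter] at he
              refine Finset.mem_erase.mpr ⟨?_, he.1⟩
              intro heq
              exact hc2 (heq ▸ he.2)
            have := Finset.card_le_card hss
            rw [Finset.card_erase_of_mem he1] at this
            have hA2' : 2 * TA.card ≤ F.card :=
              le_trans hA2 (Finset.card_le_card (Finset.filter_subset _ _))
            omega
          · have hss : F.filter (fun e => e.1 ∈ TA) ⊆ F.erase e1 := by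
              intro e he
              rw [Finset.mem_filter] at he
              refine Finset.mem_erase.mpr ⟨?_, he.1⟩
              intro heq
              exact hc (heq ▸ he.2)
            have := Finset.card_le_card hss
            rw [Finset.card_erase_of_mem he1] at this
            have hB2' : 2 * TB.card ≤ F.card :=
              le_trans hB2 (Finset.card_le_card (Finset.filter_subset _ _))
            omega
        obtain ⟨d, hd0, hdne, hdA, hdB⟩ := fmvb_exists_kernel_vec F TA TB hcnt
        exact ⟨d, hd0, hdne, hdA, hdB⟩
    obtain ⟨d, hd0, hdne, hdArow, hdBrow⟩ := hD
    have hEA : ∀ i, ∑ e ∈ univ.filter (fun e => e.1 = i), d e =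
        ∑ e ∈ F.filter (fun e => e.1 = i), d e := by
      intro i
      refine (Finset.sum_subset
        (Finset.filter_subset_filter _ (Finset.subset_univ F)) ?_).symm
      intro e he heF
      by_cases heF2 : e ∈ F
      · exact absurd (Finset.mem_filter.mpr ⟨heF2, (Finset.mem_filter.mp he).2⟩) heF
      · exact hd0 e heF2
    have hEB : ∀ j, ∑ e ∈ univ.filter (fun e => e.2 = j), d e =
        ∑ e ∈ F.filter (fun e => e.2 = j), d e := by
      intro j
      refine (Finset.sum_subset
        (Finset.filter_subset_filter _ (Finset.subset_univ F)) ?_).symm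
      intro e he heF
      by_cases heF2 : e ∈ F
      · exact absurd (Finset.mem_filter.mpr ⟨heF2, (Finset.mem_filter.mp he).2⟩) heF
      · exact hd0 e heF2
    have hrA : ∀ i, ∑ e ∈ univ.filter (fun e => e.1 = i), x₂ e = 1 →
        ∑ e ∈ univ.filter (fun e => e.1 = i), d e = 0 := by
      intro i ht
      rw [hEA i]
      by_cases hiTA : i ∈ TA
      · exact hdArow i hiTA
      · have hemp : ¬ (F.filter (fun e => e.1 = i)).Nonempty := by
          intro hne2
          exact hiTA (by
            simp only [hTAdef, Finset.mem_filter, Finset.mem_univ, true_and]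
            exact ⟨ht, hne2⟩)
        rw [Finset.not_nonempty_iff_eq_empty] at hemp
        rw [hemp, Finset.sum_empty]
    have hrB : ∀ j, ∑ e ∈ univ.filter (fun e => e.2 = j), x₂ e = (k j : ℝ) →
        ∑ e ∈ univ.filter (fun e => e.2 = j), d e = 0 := by
      intro j ht
      rw [hEB j]
      by_cases hjTB : j ∈ TB
      · exact hdBrow j hjTB
      · have hemp : ¬ (F.filter (fun e => e.2 = j)).Nonempty := by
          intro hne2
          exact hjTB (by
            simp only [hTBdef, Finset.mem_filter, Finset.mem_univ, true_and]
            exact ⟨ht, hne2⟩)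
        rw [Finset.not_nonempty_iff_eq_empty] at hemp
        rw [hemp, Finset.sum_empty]
    have hsupp : ∀ e, d e ≠ 0 → x₂ e ≠ 0 ∧ x₂ e ≠ 1 := by
      intro e hde
      have heF : e ∈ F := by
        by_contra h
        exact hde (hd0 e h)
      simpa [hFdef] using heF
    have hEvp := fmvb_perturb k A1 x₂ d hx0 hxA1 hxA hxB hsupp hrA hrB
    have hEvm := fmvb_perturb k A1 x₂ (fun e => -d e) hx0 hxA1 hxA hxB
      (fun e hde => hsupp e (by simpa using hde))
      (fun i ht => by
        rw [Finset.sum_neg_distrib, hrA i ht, neg_zero])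
      (fun j ht => by
        rw [Finset.sum_neg_distrib, hrB j ht, neg_zero])
    have hIoi : ∀ᶠ ε in nhdsWithin (0:ℝ) (Set.Ioi 0), ε ∈ Set.Ioi 0 :=
      eventually_mem_nhdsWithin
    have hBoth := Filter.Eventually.filter_mono
      (nhdsWithin_le_nhds (a := (0:ℝ)) (s := Set.Ioi 0)) (hEvp.and hEvm)
    obtain ⟨ε, ⟨hevp, hevm⟩, hεpos⟩ := (hBoth.and hIoi).exists
    rw [Set.mem_Ioi] at hεpos
    set yp : (Fin n × Fin m) → ℝ := fun e => x₂ e + ε * d e with hypdef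
    set ym : (Fin n × Fin m) → ℝ := fun e => x₂ e + ε * (-d e) with hymdef
    have hypP : yp ∈ P := ⟨hevp.1, hevp.2.1, hevp.2.2.1, hevp.2.2.2⟩
    have hymP : ym ∈ P := ⟨hevm.1, hevm.2.1, hevm.2.2.1, hevm.2.2.2⟩
    have hobjp : ∑ e, v e * yp e ≤ ∑ e, v e * x₁ e := hx₁max yp hypP
    have hobjm : ∑ e, v e * ym e ≤ ∑ e, v e * x₁ e := hx₁max ym hymP
    have hsum2 : (∑ e, v e * yp e) + (∑ e, v e * ym e) = 2 * ∑ e, v e * x₂ e := by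
      rw [← Finset.sum_add_distrib, Finset.mul_sum]
      refine Finset.sum_congr rfl fun e _ => ?_
      simp only [hypdef, hymdef]
      ring
    have heqp : ∑ e, v e * yp e = ∑ e, v e * x₁ e := by linarith
    have heqm : ∑ e, v e * ym e = ∑ e, v e * x₁ e := by linarith
    have hypK : yp ∈ K := ⟨hypP, heqp⟩
    have hymK : ym ∈ K := ⟨hymP, heqm⟩
    have hsqp : ∑ e, yp e * yp e ≤ ∑ e, x₂ e * x₂ e := hx₂max yp hypK
    have hsqm : ∑ e, ym e * ym e ≤ ∑ e, x₂ e * x₂ e := hx₂max ym hymK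
    have hsq2 : (∑ e, yp e * yp e) + (∑ e, ym e * ym e) =
        2 * (∑ e, x₂ e * x₂ e) + 2 * (ε * ε) * ∑ e, d e * d e := by
      rw [← Finset.sum_add_distrib, Finset.mul_sum, Finset.mul_sum, ← Finset.sum_add_distrib]
      refine Finset.sum_congr rfl fun e _ => ?_
      simp only [hypdef, hymdef]
      ring
    obtain ⟨ed, hed⟩ : ∃ e, d e ≠ 0 := by
      by_contra h
      push_neg at h
      exact hdne (funext h)
    have hdsq : 0 < ∑ e, d e * d e := by
      have h1 : 0 < d ed * d ed := mul_self_pos.mpr hed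
      have h2 : d ed * d ed ≤ ∑ e, d e * d e :=
        Finset.single_le_sum (fun e _ => mul_self_nonneg (d e)) (Finset.mem_univ ed)
      linarith
    have hee : 0 < ε * ε := mul_pos hεpos hεpos
    nlinarith [mul_pos hee hdsq]
  -- construct the integral matching
  set M := univ.filter (fun e : Fin n × Fin m => x₂ e = 1) with hMdef
  have hMmatch : IsMatching n m k M := by
    constructor
    · intro i
      have hcast : ((M.filter (fun e => e.1 = i)).card : ℝ) ≤ 1 := by
        have h1 : ∀ e ∈ M.filter (fun e => e.1 = i), x₂ e = 1 := by
          intro e he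
          have := (Finset.mem_filter.mp (Finset.mem_filter.mp he).1).2
          exact this
        have h2 : ∑ e ∈ M.filter (fun e => e.1 = i), x₂ e =
            ((M.filter (fun e => e.1 = i)).card : ℝ) := by
          rw [Finset.sum_congr rfl h1, Finset.sum_const, nsmul_eq_mul, mul_one]
        have h3 : M.filter (fun e => e.1 = i) ⊆ univ.filter (fun e => e.1 = i) := by
          intro e he
          exact Finset.mem_filter.mpr ⟨Finset.mem_univ e, (Finset.mem_filter.mp he).2⟩
        calc ((M.filter (fun e => e.1 = i)).card : ℝ)
            = ∑ e ∈ M.filter (fun e => e.1 = i), x₂ e := h2.symm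
          _ ≤ ∑ e ∈ univ.filter (fun e => e.1 = i), x₂ e :=
              Finset.sum_le_sum_of_subset_of_nonneg h3 (fun e _ _ => hx0 e)
          _ ≤ 1 := hxA i
      exact_mod_cast hcast
    · intro j
      have hcast : ((M.filter (fun e => e.2 = j)).card : ℝ) ≤ (k j : ℝ) := by
        have h1 : ∀ e ∈ M.filter (fun e => e.2 = j), x₂ e = 1 := by
          intro e he
          exact (Finset.mem_filter.mp (Finset.mem_filter.mp he).1).2
        have h2 : ∑ e ∈ M.filter (fun e => e.2 = j), x₂ e =
            ((M.filter (fun e => e.2 = j)).card : ℝ) := by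
          rw [Finset.sum_congr rfl h1, Finset.sum_const, nsmul_eq_mul, mul_one]
        have h3 : M.filter (fun e => e.2 = j) ⊆ univ.filter (fun e => e.2 = j) := by
          intro e he
          exact Finset.mem_filter.mpr ⟨Finset.mem_univ e, (Finset.mem_filter.mp he).2⟩
        calc ((M.filter (fun e => e.2 = j)).card : ℝ)
            = ∑ e ∈ M.filter (fun e => e.2 = j), x₂ e := h2.symm
          _ ≤ ∑ e ∈ univ.filter (fun e => e.2 = j), x₂ e :=
              Finset.sum_le_sum_of_subset_of_nonneg h3 (fun e _ _ => hx0 e)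
          _ ≤ (k j : ℝ) := hxB j
      exact_mod_cast hcast
  have hMdisj : Disjoint M A1 := by
    rw [Finset.disjoint_left]
    intro e heM heA
    have h1 : x₂ e = 1 := (Finset.mem_filter.mp heM).2
    have h0 : x₂ e = 0 := hxA1 e heA
    rw [h1] at h0
    exact one_ne_zero h0
  -- the fractional point associated with q
  set q' : (Fin n × Fin m) → ℝ := fun e => if e ∈ A1 then 0 else q e with hq'def
  have hswap : ∀ tt : Finset (Fin n × Fin m), ∑ e ∈ tt, q' e = ∑ e ∈ tt \ A1, q e := by
    intro tt
    calc ∑ e ∈ tt, q' e = ∑ e ∈ tt \ A1, q' e := by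
          refine (Finset.sum_subset Finset.sdiff_subset ?_).symm
          intro e he hne
          have heA : e ∈ A1 := by
            by_contra h
            exact hne (Finset.mem_sdiff.mpr ⟨he, h⟩)
          simp [hq'def, heA]
      _ = ∑ e ∈ tt \ A1, q e := by
          refine Finset.sum_congr rfl fun e he => ?_
          have : e ∉ A1 := (Finset.mem_sdiff.mp he).2
          simp [hq'def, this]
  have hq'P : q' ∈ P := by
    refine ⟨?_, ?_, ?_, ?_⟩
    · intro e
      by_cases he : e ∈ A1 <;> simp [hq'def, he, hq e]
    · intro e he
      simp [hq'def, he]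
    · intro i
      rw [hswap]
      calc ∑ e ∈ (univ.filter (fun e => e.1 = i)) \ A1, q e
          ≤ (matchRank n m k ((univ.filter (fun e => e.1 = i)) \ A1) : ℝ) := hfeas _
        _ ≤ 1 := by exact_mod_cast hrankA i
    · intro j
      rw [hswap]
      calc ∑ e ∈ (univ.filter (fun e => e.2 = j)) \ A1, q e
          ≤ (matchRank n m k ((univ.filter (fun e => e.2 = j)) \ A1) : ℝ) := hfeas _
        _ ≤ (k j : ℝ) := by exact_mod_cast hrankB j
  refine ⟨M, hMmatch, hMdisj, ?_⟩
  have hlhs : ∑ e ∈ Finset.univ \ A1, q e * v e = ∑ e, v e * q' e := by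
    calc ∑ e ∈ Finset.univ \ A1, q e * v e
        = ∑ e ∈ Finset.univ \ A1, v e * q' e := by
          refine Finset.sum_congr rfl fun e he => ?_
          have hne : e ∉ A1 := (Finset.mem_sdiff.mp he).2
          simp [hq'def, hne, mul_comm]
      _ = ∑ e, v e * q' e := by
          refine Finset.sum_subset Finset.sdiff_subset ?_
          intro e he hne
          have heA : e ∈ A1 := by
            by_contra h
            exact hne (Finset.mem_sdiff.mpr ⟨he, h⟩)
          simp [hq'def, heA]
  have hrhs : ∑ e, v e * x₂ e = ∑ e ∈ M, v e := by
    have h1 : ∑ e, v e * x₂ e = ∑ e : Fin n × Fin m, if x₂ e = 1 then v e else 0 := by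
      refine Finset.sum_congr rfl fun e _ => ?_
      rcases hint e with h | h <;> simp [h]
    rw [h1, ← Finset.sum_filter]
  calc ∑ e ∈ Finset.univ \ A1, q e * v e = ∑ e, v e * q' e := hlhs
    _ ≤ ∑ e, v e * x₁ e := hx₁max q' hq'P
    _ = ∑ e, v e * x₂ e := hox₂.symm
    _ = ∑ e ∈ M, v e := hrhs
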